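/- Fix r ≤ m̃/2. Sample a forest uniformly from F_{s̃}, and let X₁,…,X_{z̃} denote the children counts of the roots. For any exponents σ₁,…,σ_r ≥ 1 and distinct indices j₁ < … < j_r ≤ z̃, E[X_{j₁}^{σ₁}·…·X_{j_r}^{σ_r}] ≤ r·2^r·(Σ_i i²s̃_i/m̃)^r·(1 + Δ̃/z̃)·Δ̃^{σ₁+…+σ_r−r}. -/

import Mathlib

open scoped BigOperators Classical
open Filter MeasureTheory

namespace Paper

inductive PlaneTree : Type
  | node : List PlaneTree → PlaneTree

namespace PlaneTree

def deg : PlaneTree → ℕ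
  | node ts => ts.length

mutual
  def pos : PlaneTree → List (List ℕ)
    | node ts => [] :: posF 0 ts
  def posF : ℕ → List PlaneTree → List (List ℕ)
    | _, [] => []
    | i, t :: ts => (pos t).map (fun q => i :: q) ++ posF (i + 1) ts
end

mutual
  def dfsDeg : PlaneTree → List ℕ
    | node ts => ts.length :: dfsDegF ts
  def dfsDegF : List PlaneTree → List ℕ
    | [] => []
    | t :: ts => dfsDeg t ++ dfsDegF ts
end

def subtreeAt : PlaneTree → List ℕ → Option PlaneTree
  | t, [] => some t
  | node ts, i :: p =>
    match ts[i]? with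
    | some t' => subtreeAt t' p
    | none => none

def numChild (t : PlaneTree) (p : List ℕ) : ℕ := ((subtreeAt t p).map deg).getD 0

def IsVertex (t : PlaneTree) (p : List ℕ) : Prop := (subtreeAt t p).isSome

def IsLeaf (t : PlaneTree) (p : List ℕ) : Prop := (subtreeAt t p).isSome ∧ numChild t p = 0

/-- number of vertices of `t` having exactly `i` children (empirical children distribution) -/
def ecd (t : PlaneTree) (i : ℕ) : ℕ :=
  ((pos t).filter fun p => decide (numChild t p = i)).length

/-- ECD of a plane forest with ranked roots -/
def ecdF (f : List PlaneTree) (i : ℕ) : ℕ := (f.map fun t => ecd t i).sum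

/-- number of children of the `j`-th root of a forest -/
def rootDeg (f : List PlaneTree) (j : ℕ) : ℕ := deg (f.getD j (node []))

/-- the set of plane forests with ranked roots with ECD `s` -/
def forestSet (s : ℕ → ℕ) : Set (List PlaneTree) := {f | ∀ i, ecdF f i = s i}

/-- the set of plane trees with ECD `s` -/
def treeSet (s : ℕ → ℕ) : Set PlaneTree := {t | ∀ i, ecd t i = s i}

/-- strict depth-first (preorder) order on positions -/
def dfLT (p q : List ℕ) : Prop := List.Lex (· < ·) p q

def parent (p : List ℕ) : List ℕ := p.dropLast

/-- `q` is a strict ancestor of `p`, i.e. `q ∈ [ρ, p)` -/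
def StrictAnc (q p : List ℕ) : Prop := q <+: p ∧ q ≠ p

/-- admissible (ordered) pair of leaves -/
def Admissible (t : PlaneTree) (u v : List ℕ) : Prop :=
  IsLeaf t u ∧ IsLeaf t v ∧ 2 ≤ v.length ∧
    StrictAnc (parent (parent v)) (parent u) ∧ dfLT (parent u) (parent v)

def ASet (t : PlaneTree) : Set (List ℕ × List ℕ) := {uv | Admissible t uv.1 uv.2}

def fA (t : PlaneTree) (u : List ℕ) : Set (List ℕ) := {v | Admissible t u v}

def B2 (t : PlaneTree) (u : List ℕ) : Set (List ℕ) :=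
  {v | IsVertex t v ∧ 2 ≤ v.length ∧ StrictAnc (parent (parent v)) u}

noncomputable def leafFinset (t : PlaneTree) : Finset (List ℕ) :=
  ((pos t).toFinset).filter fun p => IsLeaf t p

def leafOf {k : ℕ} (w : Fin k → List ℕ × List ℕ) (y : Fin k × Bool) : List ℕ :=
  if y.2 then (w y.1).1 else (w y.1).2

/-- ordered `k`-tuples of admissible pairs using `2k` distinct leaves -/
def AkOrd (t : PlaneTree) (k : ℕ) : Set (Fin k → List ℕ × List ℕ) :=
  {w | (∀ a, Admissible t (w a).1 (w a).2) ∧ Function.Injective (leafOf w)}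

/-- unordered collections of `k` admissible pairs using `2k` distinct leaves -/
def Ak (t : PlaneTree) (k : ℕ) : Set (Finset (List ℕ × List ℕ)) :=
  {x | x.card = k ∧ (∀ uv ∈ x, Admissible t uv.1 uv.2) ∧
    Set.InjOn (fun y : (List ℕ × List ℕ) × Bool => if y.2 then y.1.1 else y.1.2)
      {y | y.1 ∈ x}}

/-- the set `T_s^(k)` of pairs of a plane tree with ECD `s` and a set of `k` admissible pairs -/
def Tsk (s : ℕ → ℕ) (k : ℕ) : Set (PlaneTree × Finset (List ℕ × List ℕ)) :=
  {tx | (∀ i, ecd tx.1 i = s i) ∧ tx.2 ∈ Ak tx.1 k}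

end PlaneTree

/-- labeled plane trees -/
inductive LTree : Type
  | node : ℕ → List LTree → LTree

namespace LTree

mutual
  def shape : LTree → PlaneTree
    | node _ ts => .node (shapeF ts)
  def shapeF : List LTree → List PlaneTree
    | [] => []
    | t :: ts => shape t :: shapeF ts
end

mutual
  def dfsLab : LTree → List ℕ
    | node a ts => a :: dfsLabF ts
  def dfsLabF : List LTree → List ℕ
    | [] => []
    | t :: ts => dfsLab t ++ dfsLabF ts
end

mutual
  def dfsDeg : LTree → List ℕ
    | node _ ts => ts.length :: dfsDegF ts
  def dfsDegF : List LTree → List ℕ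
    | [] => []
    | t :: ts => dfsDeg t ++ dfsDegF ts
end

def subtreeAt : LTree → List ℕ → Option LTree
  | t, [] => some t
  | node _ ts, i :: p =>
    match ts[i]? with
    | some t' => subtreeAt t' p
    | none => none

def labelAt (t : LTree) (p : List ℕ) : ℕ :=
  ((subtreeAt t p).map fun u => match u with | node a _ => a).getD 0

end LTree

/-- partial-sum steps of the permuted walk -/
def steps {m : ℕ} (c : Fin m → ℕ) (π : Equiv.Perm (Fin m)) : List ℤ :=
  List.ofFn fun i => (c (π i) : ℤ) - 1

/-- first index `j ∈ [1, length]` at which the partial sums attain their minimum -/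
noncomputable def firstMinIdx (l : List ℤ) : ℕ :=
  WithTop.untopD 0 ((Finset.Icc 1 l.length).filter fun j =>
      ∀ j' ∈ Finset.Icc 1 l.length, (l.take j).sum ≤ (l.take j').sum).min

/-- the DFS vertex sequence obtained by rotating the uniformly permuted vertex
sequence at the first minimum of its Łukasiewicz-type walk (Vervaat transform) -/
noncomputable def rotSeq {m : ℕ} (c : Fin m → ℕ) (π : Equiv.Perm (Fin m)) : List (Fin m) :=
  (List.ofFn fun i => π i).rotate (firstMinIdx (steps c π))

/-- the degree of a vertex in a (simple) edge set -/
def degIn (E : Finset (Sym2 ℕ)) (v : ℕ) : ℕ := (E.filter fun e => v ∈ e).card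

/-- degree of a vertex in a multigraph given by an edge multiset (loops count twice) -/
def mdeg (E : Multiset (Sym2 ℕ)) (v : ℕ) : ℕ :=
  (E.map fun e => (if v ∈ e then 1 else 0) + (if e = s(v, v) then 1 else 0)).sum

/-- connectivity of a (multi)graph on vertex set `V` with edges `E` -/
def ConnOn (V : Finset ℕ) (E : Set (Sym2 ℕ)) : Prop :=
  ∀ a ∈ V, ∀ b ∈ V, Relation.ReflTransGen (fun a b => s(a, b) ∈ E) a b

/-- the set of simple connected labeled graphs on `{1, …, m}` with degree sequence `d` -/
def GconSet (m : ℕ) (d : ℕ → ℕ) : Set (Finset (Sym2 ℕ)) :=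
  {E | (∀ e ∈ E, ¬ e.IsDiag) ∧ (∀ e ∈ E, ∀ v ∈ e, v ∈ Finset.Icc 1 m) ∧
       (∀ v ∈ Finset.Icc 1 m, degIn E v = d v) ∧ ConnOn (Finset.Icc 1 m) (E : Set (Sym2 ℕ))}

/-- ECD of the children sequence `(d̃₂ − 1, …, d̃_{m̃} − 1, 0, …, 0)` (with `2k` zeros) -/
def ecdFromDeg (m k : ℕ) (d : ℕ → ℕ) (i : ℕ) : ℕ :=
  ((Finset.Icc 2 m).filter fun j => d j = i + 1).card + if i = 0 then 2 * k else 0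

/-- `≪` order on admissible pairs -/
def pairLT (a b : List ℕ × List ℕ) : Prop :=
  PlaneTree.dfLT (PlaneTree.parent a.1) (PlaneTree.parent b.1) ∨
    (PlaneTree.parent a.1 = PlaneTree.parent b.1 ∧
      PlaneTree.dfLT (PlaneTree.parent a.2) (PlaneTree.parent b.2))

/-- labeled elements of `T_s^(k)` as in the sampling algorithm: a labeled plane tree whose
labels are `{2, …, m̃ + 2k}`, in which the vertex labeled `j ≤ m̃` has `d̃_j − 1` children and
the vertices labeled `> m̃` are leaves, together with a `≪`-increasing tuple of `k` admissible
pairs of leaves with distinct leaves, the `j`-th pair carrying labels `(m̃+2j−1, m̃+2j)`. -/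
def IsLabeledElement (m k : ℕ) (d : ℕ → ℕ) (t : LTree)
    (x : Fin k → List ℕ × List ℕ) : Prop :=
  (LTree.dfsLab t).Perm (List.range' 2 (m - 1 + 2 * k)) ∧
  (∀ p ∈ PlaneTree.pos (LTree.shape t),
    PlaneTree.numChild (LTree.shape t) p =
      (if 2 ≤ LTree.labelAt t p ∧ LTree.labelAt t p ≤ m then d (LTree.labelAt t p) - 1 else 0)) ∧
  (∀ j, PlaneTree.Admissible (LTree.shape t) (x j).1 (x j).2) ∧
  Function.Injective (PlaneTree.leafOf x) ∧
  (∀ j j' : Fin k, j < j' → pairLT (x j) (x j')) ∧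
  (∀ j : Fin k, LTree.labelAt t (x j).1 = m + 2 * (j : ℕ) + 1 ∧
      LTree.labelAt t (x j).2 = m + 2 * (j : ℕ) + 2)

/-- the edge multiset of the graph `I(t, x)`: tree edges, with the leaves of the admissible
pairs deleted and an edge joining the two parents of each admissible pair added -/
noncomputable def Iedges (t : LTree) {k : ℕ} (x : Fin k → List ℕ × List ℕ) :
    Multiset (Sym2 ℕ) :=
  (↑(((PlaneTree.pos (LTree.shape t)).filter fun p =>
        decide (p ≠ ([] : List ℕ) ∧ ∀ j, p ≠ (x j).1 ∧ p ≠ (x j).2)).map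
      fun p => s(LTree.labelAt t (PlaneTree.parent p), LTree.labelAt t p)) : Multiset (Sym2 ℕ))
  + ↑(List.ofFn fun j =>
      s(LTree.labelAt t (PlaneTree.parent (x j).1), LTree.labelAt t (PlaneTree.parent (x j).2)))

/- Brownian excursion: Gaussian/Bessel kernels and finite-dimensional densities -/
noncomputable def gaussD (s x : ℝ) : ℝ := Real.exp (-(x ^ 2) / (2 * s)) / Real.sqrt (2 * Real.pi * s)

noncomputable def killedK (s x y : ℝ) : ℝ := gaussD s (y - x) - gaussD s (y + x)

noncomputable def bes3K (s x y : ℝ) : ℝ := (y / x) * killedK s x y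

noncomputable def exStart (t x : ℝ) : ℝ :=
  Real.sqrt (2 / Real.pi) * x ^ 2 * t ^ (-(3 : ℝ) / 2) * Real.exp (-(x ^ 2) / (2 * t))

noncomputable def exEnd (s x : ℝ) : ℝ := (2 / s) * gaussD s x

/-- finite-dimensional density of the standard Brownian excursion at times `t 0 < … < t n` -/
noncomputable def exFdd {n : ℕ} (t : Fin (n + 1) → ℝ) (x : Fin (n + 1) → ℝ) : ℝ :=
  if ∀ i, 0 < x i then
    Real.sqrt (Real.pi / 2) * exStart (t 0) (x 0) *
      (∏ i : Fin n, bes3K (t i.succ - t i.castSucc) (x i.castSucc) (x i.succ)) *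
      exEnd (1 - t (Fin.last n)) (x (Fin.last n))
  else 0

/-- `e` is a standard Brownian excursion on `[0,1]`: continuous nonnegative paths vanishing at
the endpoints, positive inside, with the excursion finite-dimensional densities. -/
def IsStdBrownianExcursion {Ω : Type*} [MeasureSpace Ω] (e : Ω → ℝ → ℝ) : Prop :=
  (∀ ω, Continuous (e ω)) ∧ (∀ ω, e ω 0 = 0) ∧ (∀ ω, e ω 1 = 0) ∧
  (∀ ω, ∀ x ∈ Set.Ioo (0 : ℝ) 1, 0 < e ω x) ∧
  (∀ t : ℝ, Measurable fun ω => e ω t) ∧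
  ∀ (n : ℕ) (t : Fin (n + 1) → ℝ), StrictMono t → 0 < t 0 → t (Fin.last n) < 1 →
    Measure.map (fun ω i => e ω (t i)) (volume : Measure Ω)
      = volume.withDensity fun x => ENNReal.ofReal (exFdd t x)

/-- `j`-th smallest value (0-based) among `ω 0, …, ω (m−1)` -/
noncomputable def orderStat {m : ℕ} (ω : Fin m → ℝ) (j : ℕ) : ℝ :=
  ((Multiset.map ω Finset.univ.val).sort (· ≤ ·)).getD j 0

end Paper

namespace Paper
namespace PlaneTree

-- ============ chunk 1 ============

def kids : PlaneTree → List PlaneTree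
  | node ts => ts

@[simp] lemma numChild_nil (ts : List PlaneTree) : numChild (node ts) [] = ts.length := rfl

lemma subtreeAt_cons (us : List PlaneTree) (t : PlaneTree) (n : ℕ) (h : us[n]? = some t)
    (p : List ℕ) : subtreeAt (node us) (n :: p) = subtreeAt t p := by
  simp [subtreeAt, h]

lemma numChild_cons (us : List PlaneTree) (t : PlaneTree) (n : ℕ) (h : us[n]? = some t)
    (p : List ℕ) : numChild (node us) (n :: p) = numChild t p := by
  simp [numChild, subtreeAt_cons us t n h]

@[simp] lemma ecdF_nil (i : ℕ) : ecdF [] i = 0 := rfl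

lemma ecdF_cons (t : PlaneTree) (l : List PlaneTree) (i : ℕ) :
    ecdF (t :: l) i = ecd t i + ecdF l i := by simp [ecdF]

lemma ecdF_append (l₁ l₂ : List PlaneTree) (i : ℕ) :
    ecdF (l₁ ++ l₂) i = ecdF l₁ i + ecdF l₂ i := by simp [ecdF]

lemma posF_filter_length (i : ℕ) (ts : List PlaneTree) :
    ∀ (us : List PlaneTree) (n : ℕ),
      (∀ k (t : PlaneTree), ts[k]? = some t → us[n + k]? = some t) →
      ((posF n ts).filter fun p => decide (numChild (node us) p = i)).length = ecdF ts i := by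
  induction ts with
  | nil => intro us n h; simp [posF]
  | cons t ts ih =>
    intro us n h
    have ht : us[n]? = some t := by simpa using h 0 t (by simp)
    rw [posF, List.filter_append, List.length_append, List.filter_map, List.length_map]
    have h1 : ((pos t).filter ((fun p => decide (numChild (node us) p = i)) ∘
        (fun q => n :: q))) = (pos t).filter fun p => decide (numChild t p = i) := by
      apply List.filter_congr
      intro p _
      simp [Function.comp, numChild_cons us t n ht p]
    rw [h1]
    have h2 := ih us (n + 1) (fun k t' hk => by
      have := h (k + 1) t' (by simpa using hk)
      rw [show n + 1 + k = n + (k + 1) by omega]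
      exact this)
    rw [h2, ecdF_cons]
    rfl

lemma ecd_node (ts : List PlaneTree) (i : ℕ) :
    ecd (node ts) i = (if ts.length = i then 1 else 0) + ecdF ts i := by
  rw [ecd, pos, List.filter_cons]
  have := posF_filter_length i ts ts 0 (fun k t hk => by simpa using hk)
  simp only [numChild_nil]
  by_cases hl : ts.length = i
  · simp [hl, this]
    omega
  · simp [hl, this]

lemma one_le_ecd_deg (t : PlaneTree) : 1 ≤ ecd t (deg t) := by
  cases t with
  | node ts => rw [ecd_node]; simp [deg]

-- ============ chunk 2 ============

lemma ecdF_perm {l₁ l₂ : List PlaneTree} (h : l₁.Perm l₂) (i : ℕ) : ecdF l₁ i = ecdF l₂ i :=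
  (h.map _).sum_eq

lemma sizeOf_append_le (l₁ l₂ : List PlaneTree) : sizeOf (l₁ ++ l₂) ≤ sizeOf l₁ + sizeOf l₂ := by
  induction l₁ with
  | nil => simp
  | cons a l ih => simp only [List.cons_append, List.cons.sizeOf_spec]; omega

lemma ecdF_sum_len (K : ℕ) : ∀ (l : List PlaneTree), (∀ i, K ≤ i → ecdF l i = 0) →
    ∑ i ∈ Finset.range K, ecdF l i = l.length + ∑ i ∈ Finset.range K, i * ecdF l i
  | [], _ => by simp
  | (node ts) :: l', h => by
    have hkey : ∀ i, ecdF (node ts :: l') i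
        = (if ts.length = i then 1 else 0) + ecdF (ts ++ l') i := by
      intro i; rw [ecdF_cons, ecd_node, ecdF_append]; ring
    have hlen : ts.length < K := by
      by_contra hK
      have h0 := h ts.length (by omega)
      rw [hkey] at h0; simp at h0
    have hsub : ∀ i, K ≤ i → ecdF (ts ++ l') i = 0 := by
      intro i hi
      have h0 := h i hi
      rw [hkey i] at h0
      omega
    have IH := ecdF_sum_len K (ts ++ l') hsub
    have e1 : ∑ i ∈ Finset.range K, ecdF (node ts :: l') i
        = 1 + ∑ i ∈ Finset.range K, ecdF (ts ++ l') i := by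
      simp only [hkey]
      rw [Finset.sum_add_distrib, Finset.sum_ite_eq]
      simp [Finset.mem_range.mpr hlen]
    have e2 : ∑ i ∈ Finset.range K, i * ecdF (node ts :: l') i
        = ts.length + ∑ i ∈ Finset.range K, i * ecdF (ts ++ l') i := by
      simp only [hkey, Nat.mul_add, mul_ite, Nat.mul_one, Nat.mul_zero]
      rw [Finset.sum_add_distrib]
      congr 1
      have : ∀ i ∈ Finset.range K, (if ts.length = i then i else 0)
          = (if ts.length = i then ts.length else 0) := by
        intro i _; by_cases hi : ts.length = i <;> simp [hi]
      rw [Finset.sum_congr rfl this, Finset.sum_ite_eq]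
      simp [Finset.mem_range.mpr hlen]
    rw [e1, e2, IH]
    simp only [List.length_append, List.length_cons]
    omega
termination_by l => sizeOf l
decreasing_by
  have := sizeOf_append_le ts l'
  simp only [List.cons.sizeOf_spec, PlaneTree.node.sizeOf_spec]
  omega

lemma length_forest {s : ℕ → ℕ} {K : ℕ} (hs : ∀ i, K ≤ i → s i = 0) {f : List PlaneTree}
    (hf : f ∈ forestSet s) :
    ∑ i ∈ Finset.range K, s i = f.length + ∑ i ∈ Finset.range K, i * s i := by
  have hf' : ∀ i, ecdF f i = s i := hf
  have h := ecdF_sum_len K f (fun i hi => by rw [hf' i]; exact hs i hi)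
  simpa only [hf'] using h

lemma forestSet_zero {s : ℕ → ℕ} (hs : ∀ i, s i = 0) : forestSet s = {[]} := by
  ext f
  constructor
  · intro hf
    have hf' : ∀ i, ecdF f i = s i := hf
    cases f with
    | nil => rfl
    | cons t l =>
      exfalso
      have h1 : 1 ≤ ecdF (t :: l) (deg t) := by
        rw [ecdF_cons]
        have := one_le_ecd_deg t
        omega
      rw [hf' (deg t), hs (deg t)] at h1
      omega
  · intro hf
    rcases hf with rfl
    intro i
    simp [hs i]

lemma ecd_getD_le_ecdF (f : List PlaneTree) (p : ℕ) (hp : p < f.length) (i : ℕ) :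
    ecd (f.getD p (node [])) i ≤ ecdF f i := by
  induction f generalizing p with
  | nil => simp at hp
  | cons t l ih =>
    cases p with
    | zero => rw [ecdF_cons]; simp
    | succ p =>
      have := ih p (by simpa using hp)
      rw [ecdF_cons, List.getD_cons_succ]
      omega

lemma one_le_s_of_rootDeg {s : ℕ → ℕ} {f : List PlaneTree} (hf : f ∈ forestSet s) {p i : ℕ}
    (hp : p < f.length) (hd : rootDeg f p = i) : 1 ≤ s i := by
  have hf' : ∀ i, ecdF f i = s i := hf
  rw [← hf' i]
  have h1 : 1 ≤ ecd (f.getD p (node [])) i := by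
    rw [← hd]; exact one_le_ecd_deg _
  exact le_trans h1 (ecd_getD_le_ecdF f p hp i)

lemma rotate_mem_forestSet {s : ℕ → ℕ} {f : List PlaneTree} (hf : f ∈ forestSet s) (n : ℕ) :
    f.rotate n ∈ forestSet s := by
  intro i
  rw [ecdF_perm (f.rotate_perm n) i]
  exact hf i

lemma rootDeg_rotate (f : List PlaneTree) (n a : ℕ) (ha : a < f.length) :
    rootDeg (f.rotate n) a = rootDeg f ((a + n) % f.length) := by
  unfold rootDeg
  have h0 : 0 < f.length := by omega
  rw [List.getD_eq_getElem _ _ (by simpa using ha),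
    List.getD_eq_getElem _ _ (Nat.mod_lt _ h0)]
  congr 1
  exact List.getElem_rotate f n a _

-- ============ chunk 3 ============

/-- remove the `q`-th root, promoting its children to the end of the root list -/
def step (q : ℕ) (f : List PlaneTree) : List PlaneTree :=
  (f.rotate q).tail ++ kids ((f.rotate q).getD 0 (node []))

lemma step_cons (q : ℕ) (f : List PlaneTree) (ts : List PlaneTree) (l : List PlaneTree)
    (h : f.rotate q = node ts :: l) : step q f = l ++ ts := by
  rw [step, h]; rfl

section stepbij

variable {s : ℕ → ℕ} {K m z q i : ℕ}

/-- the ECD after removing one vertex with `i` children -/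
def dec (s : ℕ → ℕ) (i : ℕ) : ℕ → ℕ := fun v => s v - if v = i then 1 else 0

lemma sum_dec (hs : ∀ v, K ≤ v → s v = 0) (hsi : 1 ≤ s i) :
    ∑ v ∈ Finset.range K, dec s i v + 1 = ∑ v ∈ Finset.range K, s v := by
  have hiK : i < K := by
    by_contra h
    have := hs i (by omega); omega
  simp only [dec]
  rw [Finset.sum_tsub_distrib]
  · rw [Finset.sum_ite_eq' (Finset.range K) i (fun _ => 1), if_pos (Finset.mem_range.mpr hiK)]
    have h1 : ∀ v ∈ Finset.range K, (if v = i then 1 else 0) ≤ s v := by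
      intro v _; by_cases hv : v = i <;> simp [hv] <;> omega
    have h2 : (∑ v ∈ Finset.range K, if v = i then (1:ℕ) else 0) ≤ ∑ v ∈ Finset.range K, s v := by
      apply Finset.sum_le_sum h1
    rw [Finset.sum_ite_eq' (Finset.range K) i (fun _ => 1), if_pos (Finset.mem_range.mpr hiK)] at h2
    omega
  · intro v _; by_cases hv : v = i <;> simp [hv] <;> omega

lemma sum_mul_dec (hs : ∀ v, K ≤ v → s v = 0) (hsi : 1 ≤ s i) :
    ∑ v ∈ Finset.range K, v * dec s i v + i = ∑ v ∈ Finset.range K, v * s v := by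
  have hiK : i < K := by
    by_contra h
    have := hs i (by omega); omega
  have key : ∀ v ∈ Finset.range K, v * dec s i v + (if v = i then v else 0) = v * s v := by
    intro v _
    by_cases hv : v = i
    · subst hv
      simp only [dec, if_pos rfl]
      have h1 : s v - 1 + 1 = s v := by omega
      calc v * (s v - 1) + v = v * (s v - 1 + 1) := by rw [Nat.mul_succ]
        _ = v * s v := by rw [h1]
    · simp [dec, hv]
  have := Finset.sum_congr rfl key
  rw [Finset.sum_add_distrib, Finset.sum_ite_eq' (Finset.range K) i (fun v => v),
    if_pos (Finset.mem_range.mpr hiK)] at this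
  exact this

lemma i_le_E (hs : ∀ v, K ≤ v → s v = 0) (hsi : 1 ≤ s i) :
    i ≤ ∑ v ∈ Finset.range K, v * s v := by
  have hiK : i < K := by
    by_contra h
    have := hs i (by omega); omega
  have h1 : i * s i ≤ ∑ v ∈ Finset.range K, v * s v :=
    Finset.single_le_sum (f := fun v => v * s v) (fun v _ => Nat.zero_le _)
      (Finset.mem_range.mpr hiK)
  have h2 : i ≤ i * s i := by
    calc i = i * 1 := (Nat.mul_one i).symm
      _ ≤ i * s i := Nat.mul_le_mul_left i hsi
  omega

lemma length_forest_dec (hs : ∀ v, K ≤ v → s v = 0)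
    (hm : ∑ v ∈ Finset.range K, s v = m) (hz : m = z + ∑ v ∈ Finset.range K, v * s v)
    (hz1 : 1 ≤ z) (hsi : 1 ≤ s i) {g : List PlaneTree} (hg : g ∈ forestSet (dec s i)) :
    g.length = z - 1 + i := by
  have hds : ∀ v, K ≤ v → dec s i v = 0 := by
    intro v hv; simp [dec, hs v hv]
  have h1 := length_forest hds hg
  have h2 := sum_dec hs hsi (K := K)
  have h3 := sum_mul_dec hs hsi (K := K)
  have h4 := i_le_E hs hsi (K := K)
  omega

lemma length_mem_forest (hs : ∀ v, K ≤ v → s v = 0)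
    (hm : ∑ v ∈ Finset.range K, s v = m) (hz : m = z + ∑ v ∈ Finset.range K, v * s v)
    {f : List PlaneTree} (hf : f ∈ forestSet s) : f.length = z := by
  have h1 := length_forest hs hf
  omega

lemma step_bijOn (hs : ∀ v, K ≤ v → s v = 0)
    (hm : ∑ v ∈ Finset.range K, s v = m) (hz : m = z + ∑ v ∈ Finset.range K, v * s v)
    (hz1 : 1 ≤ z) (hq : q < z) (hsi : 1 ≤ s i) :
    Set.BijOn (step q) {f ∈ forestSet s | rootDeg f q = i} (forestSet (dec s i)) := by
  -- common facts for the forward direction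
  have fwd : ∀ f ∈ {f ∈ forestSet s | rootDeg f q = i},
      ∃ ts l, f.rotate q = node ts :: l ∧ ts.length = i ∧ l.length = z - 1 ∧
        step q f = l ++ ts ∧ step q f ∈ forestSet (dec s i) := by
    rintro f ⟨hf, hd⟩
    have hflen : f.length = z := length_mem_forest hs hm hz hf
    have hf₁ : f.rotate q ∈ forestSet s := rotate_mem_forestSet hf q
    have hlen₁ : (f.rotate q).length = z := by rw [List.length_rotate]; exact hflen
    have hne : f.rotate q ≠ [] := by
      intro h; rw [h] at hlen₁; simp at hlen₁; omega
    obtain ⟨t, l, hcons⟩ := List.exists_cons_of_ne_nil hne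
    obtain ⟨ts⟩ := t
    have hd₁ : rootDeg (f.rotate q) 0 = i := by
      rw [rootDeg_rotate f q 0 (by omega)]
      rw [Nat.zero_add, Nat.mod_eq_of_lt (by omega)]
      exact hd
    have hts : ts.length = i := by
      rw [hcons] at hd₁
      simpa [rootDeg, deg] using hd₁
    have hl : l.length = z - 1 := by
      rw [hcons] at hlen₁; simp at hlen₁; omega
    have hstep := step_cons q f ts l hcons
    refine ⟨ts, l, hcons, hts, hl, hstep, ?_⟩
    intro v
    have hecd : ecdF (f.rotate q) v = s v := hf₁ v
    rw [hcons, ecdF_cons, ecd_node] at hecd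
    rw [hstep, ecdF_append, dec, ← hts]
    by_cases hv : ts.length = v
    · rw [if_pos (by omega)] at hecd ⊢
      omega
    · rw [if_neg (by omega)] at hecd ⊢
      omega
  constructor
  · intro f hf
    obtain ⟨_, _, _, _, _, _, h⟩ := fwd f hf
    exact h
  constructor
  · -- InjOn
    intro f hfA f' hfA' heq
    obtain ⟨ts, l, hc, hts, hl, hst, _⟩ := fwd f hfA
    obtain ⟨ts', l', hc', hts', hl', hst', _⟩ := fwd f' hfA'
    have happ : l ++ ts = l' ++ ts' := by rw [← hst, ← hst', heq]
    obtain ⟨rfl, rfl⟩ := List.append_inj happ (by omega)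
    have hrot : f.rotate q = f'.rotate q := by rw [hc, hc']
    have hflen : f.length = z := length_mem_forest hs hm hz hfA.1
    have hflen' : f'.length = z := length_mem_forest hs hm hz hfA'.1
    have h1 : (f.rotate q).rotate (z - q) = (f'.rotate q).rotate (z - q) := by rw [hrot]
    rw [List.rotate_rotate, List.rotate_rotate, show q + (z - q) = z by omega] at h1
    have e1 : f.rotate z = f := by rw [← hflen]; exact List.rotate_length f
    have e2 : f'.rotate z = f' := by rw [← hflen']; exact List.rotate_length f'
    rwa [e1, e2] at h1
  · -- SurjOn
    intro g hg
    have hgl : g.length = z - 1 + i := length_forest_dec hs hm hz hz1 hsi hg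
    set ts : List PlaneTree := g.drop (z-1) with hts_def
    set l : List PlaneTree := g.take (z-1) with hl_def
    have hlt : l ++ ts = g := List.take_append_drop (z-1) g
    have hll : l.length = z - 1 := by
      rw [hl_def, List.length_take]; omega
    have htl : ts.length = i := by
      rw [hts_def, List.length_drop]; omega
    set f₁ : List PlaneTree := node ts :: l with hf₁_def
    have hf₁len : f₁.length = z := by simp [hf₁_def, hll]; omega
    have hf₁mem : f₁ ∈ forestSet s := by
      intro v
      have hgv : ecdF g v = dec s i v := hg v
      rw [← hlt, ecdF_append] at hgv
      rw [hf₁_def, ecdF_cons, ecd_node, htl]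
      unfold dec at hgv
      have hiK : i < K := by
        by_contra h
        have := hs i (by omega); omega
      by_cases hv : i = v
      · subst hv
        rw [if_pos rfl]
        rw [if_pos rfl] at hgv
        omega
      · rw [if_neg hv]
        rw [if_neg (fun hh => hv hh.symm)] at hgv
        omega
    set f : List PlaneTree := f₁.rotate (z - q) with hf_def
    have hfq : f.rotate q = f₁ := by
      rw [hf_def, List.rotate_rotate, show z - q + q = z by omega, ← hf₁len,
        List.rotate_length]
    have hfmem : f ∈ forestSet s := rotate_mem_forestSet hf₁mem (z - q)
    have hflen : f.length = z := by rw [hf_def, List.length_rotate]; exact hf₁len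
    have hfd : rootDeg f q = i := by
      have := rootDeg_rotate f q 0 (by omega)
      rw [hfq, Nat.zero_add, hflen, Nat.mod_eq_of_lt (by omega)] at this
      rw [← this, hf₁_def]
      simp [rootDeg, deg, htl]
    refine ⟨f, ⟨hfmem, hfd⟩, ?_⟩
    rw [step_cons q f ts l (by rw [hfq, hf₁_def]), hlt]

end stepbij

-- ============ chunk 4 ============
open scoped Nat

lemma forestSet_emptyish {s : ℕ → ℕ} {K : ℕ} (hs : ∀ v, K ≤ v → s v = 0)
    (hE : ∑ v ∈ Finset.range K, s v ≤ ∑ v ∈ Finset.range K, v * s v)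
    (hm1 : 1 ≤ ∑ v ∈ Finset.range K, s v) : forestSet s = ∅ := by
  ext f
  simp only [Set.mem_empty_iff_false, iff_false]
  intro hf
  have h := length_forest hs hf
  have hlen : f.length = 0 := by omega
  rcases List.length_eq_zero_iff.mp hlen with rfl
  have : ∀ v, s v = 0 := fun v => (hf v).symm
  have : ∑ v ∈ Finset.range K, s v = 0 := Finset.sum_eq_zero fun v _ => this v
  omega

lemma forestSet_finite (K : ℕ) : ∀ (m : ℕ) (s : ℕ → ℕ), (∀ v, K ≤ v → s v = 0) →
    (∑ v ∈ Finset.range K, s v = m) → (forestSet s).Finite := by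
  intro m
  induction m using Nat.strong_induction_on with
  | _ m IH =>
    intro s hs hm
    by_cases hze : m ≤ ∑ v ∈ Finset.range K, v * s v
    · apply Set.Finite.subset (Set.finite_singleton ([] : List PlaneTree))
      intro f hf
      have h := length_forest hs hf
      have hlen : f.length = 0 := by omega
      simp [List.length_eq_zero_iff.mp hlen]
    · set E := ∑ v ∈ Finset.range K, v * s v with hE
      set z := m - E with hzdef
      have hz1 : 1 ≤ z := by omega
      have hmz : m = z + E := by omega
      have hfinA : ∀ i ∈ Finset.range K, ({f ∈ forestSet s | rootDeg f 0 = i}).Finite := by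
        intro i _
        by_cases hsi : 1 ≤ s i
        · have bij := step_bijOn hs hm hmz hz1 (q := 0) (by omega) hsi
          have hsum := sum_dec (K := K) hs hsi
          have hfin' : (forestSet (dec s i)).Finite := by
            apply IH (m - 1) (by omega) (dec s i)
            · intro v hv; simp [dec, hs v hv]
            · omega
          exact Set.Finite.of_finite_image (bij.image_eq ▸ hfin') bij.injOn
        · apply Set.Finite.subset (Set.finite_empty)
          rintro f ⟨hf, hd⟩
          exfalso
          have hlen : f.length = z := length_mem_forest hs hm hmz hf
          have := one_le_s_of_rootDeg hf (by omega : (0:ℕ) < f.length) hd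
          omega
      apply Set.Finite.subset (Set.Finite.biUnion (Finset.range K).finite_toSet hfinA)
      intro f hf
      have hlen : f.length = z := length_mem_forest hs hm hmz hf
      have h1 := one_le_s_of_rootDeg hf (by omega : (0:ℕ) < f.length) rfl
      have hiK : rootDeg f 0 < K := by
        by_contra h
        have := hs _ (by omega : K ≤ rootDeg f 0)
        omega
      exact Set.mem_biUnion (by simpa using hiK) ⟨hf, rfl⟩

lemma prod_factorial_dec {s : ℕ → ℕ} {K i : ℕ} (hiK : i < K) (hsi : 1 ≤ s i) :
    ∏ v ∈ Finset.range K, (s v)! = s i * ∏ v ∈ Finset.range K, (dec s i v)! := by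
  have key : ∀ v ∈ Finset.range K, (s v)! = (dec s i v)! * (if v = i then s i else 1) := by
    intro v _
    by_cases hv : v = i
    · subst hv
      simp only [dec, if_pos rfl]
      rw [Nat.mul_comm]
      exact (Nat.mul_factorial_pred (by omega)).symm
    · simp [dec, hv]
  rw [Finset.prod_congr rfl key, Finset.prod_mul_distrib,
    Finset.prod_ite_eq' (Finset.range K) i (fun _ => s i), if_pos (Finset.mem_range.mpr hiK)]
  ring

lemma forestSet_ncard_eq (K : ℕ) : ∀ (m : ℕ) (s : ℕ → ℕ) (z : ℕ), (∀ v, K ≤ v → s v = 0) →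
    (∑ v ∈ Finset.range K, s v = m) → (m = z + ∑ v ∈ Finset.range K, v * s v) → 1 ≤ z →
    (forestSet s).ncard * ∏ v ∈ Finset.range K, (s v)! = z * (m - 1)! := by
  intro m
  induction m using Nat.strong_induction_on with
  | _ m IH =>
    intro s z hs hm hz hz1
    set E := ∑ v ∈ Finset.range K, v * s v with hE
    have hm1 : 1 ≤ m := by omega
    have hfin := forestSet_finite K m s hs hm
    by_cases hm2 : m = 1
    · -- the singleton case
      subst hm2
      have hEzero : E = 0 := by omega
      have hz0 : z = 1 := by omega
      have hK1 : 0 < K := by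
        by_contra h
        rw [Finset.range_eq_empty_iff.mpr (by omega)] at hm
        simp at hm
      have hv0 : ∀ v, 1 ≤ v → s v = 0 := by
        intro v hv
        by_cases hvK : v < K
        · have h1 : v * s v ≤ E := by
            rw [hE]
            exact Finset.single_le_sum (f := fun v => v * s v) (fun _ _ => Nat.zero_le _)
              (Finset.mem_range.mpr hvK)
          have := Nat.mul_eq_zero.mp (by omega : v * s v = 0)
          omega
        · exact hs v (by omega)
      have hs0 : s 0 = 1 := by
        have h9 : ∑ v ∈ Finset.range K, s v = s 0 := by
          simpa using Finset.sum_eq_single_of_mem (0:ℕ) (Finset.mem_range.mpr hK1)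
            (f := fun v => s v) (fun v _ hv => hv0 v (by omega))
        omega
      have hset : forestSet s = {[node []]} := by
        ext f
        constructor
        · intro hf
          have hlen : f.length = 1 := by
            have := length_mem_forest hs hm hz hf
            omega
          obtain ⟨t, l, rfl⟩ := List.exists_cons_of_ne_nil (l := f)
            (by intro h; rw [h] at hlen; simp at hlen)
          have hl : l = [] := by
            have : l.length = 0 := by simpa using hlen
            exact List.length_eq_zero_iff.mp this
          subst hl
          obtain ⟨ts⟩ := t
          have hts : ts.length = 0 := by
            have h1 : 1 ≤ s ts.length := one_le_s_of_rootDeg hf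
              (by simp : (0:ℕ) < [node ts].length) (by simp [rootDeg, deg])
            by_contra h
            have := hv0 ts.length (by omega)
            omega
          rcases List.length_eq_zero_iff.mp hts with rfl
          rfl
        · rintro rfl
          intro v
          rw [ecdF_cons, ecd_node]
          simp only [List.length_nil, ecdF_nil]
          by_cases hv : v = 0
          · subst hv; simp [hs0]
          · rw [if_neg (fun h => hv h.symm)]
            by_cases hvK : v < K
            · have := hv0 v (by omega); omega
            · have := hs v (by omega); omega
      rw [hset]
      simp only [Set.ncard_singleton, Nat.one_mul]
      have : ∀ v ∈ Finset.range K, (s v)! = 1 := by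
        intro v hv
        by_cases h0 : v = 0
        · subst h0; simp [hs0]
        · rw [hv0 v (by omega)]; rfl
      rw [Finset.prod_congr rfl this]
      simp [hz0]
    · -- m ≥ 2 : fiber decomposition
      have hm2' : 2 ≤ m := by omega
      set T := hfin.toFinset with hT
      have hmem : ∀ f, f ∈ T ↔ f ∈ forestSet s := fun f => Set.Finite.mem_toFinset hfin
      have hmaps : ∀ f ∈ T, rootDeg f 0 ∈ Finset.range K := by
        intro f hf
        have hf' := (hmem f).mp hf
        have hlen : f.length = z := length_mem_forest hs hm hz hf'
        have h1 := one_le_s_of_rootDeg hf' (by omega : (0:ℕ) < f.length) rfl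
        refine Finset.mem_range.mpr ?_
        by_contra h
        have := hs _ (by omega : K ≤ rootDeg f 0)
        omega
      have hcard := Finset.card_eq_sum_card_fiberwise hmaps
      have hfiber : ∀ i ∈ Finset.range K,
          (T.filter fun f => rootDeg f 0 = i).card * ∏ v ∈ Finset.range K, (s v)!
            = ((z + i - 1) * s i) * (m - 2)! := by
        intro i hiK'
        have hiK : i < K := Finset.mem_range.mp hiK'
        by_cases hsi : 1 ≤ s i
        · -- card of fiber = ncard forestSet (dec s i)
          have bij := step_bijOn hs hm hz hz1 (q := 0) (by omega) hsi
          have hcardA : (T.filter fun f => rootDeg f 0 = i).card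
              = (forestSet (dec s i)).ncard := by
            have hAset : ({f ∈ forestSet s | rootDeg f 0 = i} : Set (List PlaneTree))
                = ↑(T.filter fun f => rootDeg f 0 = i) := by
              ext f
              simp [hmem f]
            rw [← Set.ncard_coe_finset, ← hAset, ← bij.image_eq,
              Set.ncard_image_of_injOn bij.injOn]
          rw [hcardA]
          have hds : ∀ v, K ≤ v → dec s i v = 0 := fun v hv => by simp [dec, hs v hv]
          have hsum := sum_dec (K := K) hs hsi
          have hsmul := sum_mul_dec (K := K) hs hsi
          have hiE := i_le_E (K := K) hs hsi
          by_cases hdeg : i = 0 ∧ z = 1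
          · obtain ⟨rfl, rfl⟩ := hdeg
            have hempty : forestSet (dec s 0) = ∅ := by
              apply forestSet_emptyish hds <;> omega
            rw [hempty]
            simp
          · have hz' : 1 ≤ z + i - 1 := by omega
            have IH' := IH (m - 1) (by omega) (dec s i) (z + i - 1) hds (by omega) (by omega) hz'
            rw [prod_factorial_dec hiK hsi]
            calc (forestSet (dec s i)).ncard * (s i * ∏ v ∈ Finset.range K, (dec s i v)!)
                = ((forestSet (dec s i)).ncard * ∏ v ∈ Finset.range K, (dec s i v)!) * s i := by
                  ring
              _ = ((z + i - 1) * (m - 1 - 1)!) * s i := by rw [IH']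
              _ = ((z + i - 1) * s i) * (m - 2)! := by
                  have : m - 1 - 1 = m - 2 := by omega
                  rw [this]; ring
        · have hempty : (T.filter fun f => rootDeg f 0 = i) = ∅ := by
            apply Finset.filter_eq_empty_iff.mpr
            intro f hf
            have hf' := (hmem f).mp hf
            have hlen : f.length = z := length_mem_forest hs hm hz hf'
            intro hd
            have := one_le_s_of_rootDeg hf' (by omega : (0:ℕ) < f.length) hd
            omega
          rw [hempty]
          simp
          omega
      have hsum1 : (∑ i ∈ Finset.range K, (T.filter fun f => rootDeg f 0 = i).card)
            * ∏ v ∈ Finset.range K, (s v)!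
          = ∑ i ∈ Finset.range K, ((z + i - 1) * s i) * (m - 2)! := by
        rw [Finset.sum_mul]
        exact Finset.sum_congr rfl hfiber
      have hsum2 : ∑ i ∈ Finset.range K, ((z + i - 1) * s i) * (m - 2)!
          = z * (m - 1)! := by
        rw [← Finset.sum_mul]
        have e1 : ∀ i ∈ Finset.range K, (z + i - 1) * s i = (z - 1) * s i + i * s i := by
          intro i _
          have : z + i - 1 = (z - 1) + i := by omega
          rw [this, Nat.add_mul]
        rw [Finset.sum_congr rfl e1, Finset.sum_add_distrib, ← Finset.mul_sum, hm, ← hE]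
        have e2 : (z - 1) * m + E = z * (m - 1) := by
          obtain ⟨z', rfl⟩ := Nat.exists_eq_succ_of_ne_zero (by omega : z ≠ 0)
          have hmE : m = z' + 1 + E := by omega
          subst hmE
          rw [show z'.succ - 1 = z' from rfl, show z' + 1 + E - 1 = z' + E by omega,
            Nat.succ_eq_add_one]
          ring
        rw [e2]
        have e3 : (m - 1)! = (m - 1) * (m - 2)! := by
          have h1 : 0 < m - 1 := by omega
          have := Nat.mul_factorial_pred (by omega : m - 1 ≠ 0)
          have h2 : m - 1 - 1 = m - 2 := by omega
          rw [h2] at this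
          omega
        rw [e3]
        ring
      rw [Set.ncard_eq_toFinset_card (forestSet s) hfin, ← hT, hcard, hsum1, hsum2]

-- ============ chunk 5 ============

lemma rootDeg_append_left (l l' : List PlaneTree) (k : ℕ) (hk : k < l.length) :
    rootDeg (l ++ l') k = rootDeg l k := by
  unfold rootDeg
  rw [List.getD_append _ _ _ _ hk]

lemma rootDeg_cons_succ (t : PlaneTree) (l : List PlaneTree) (k : ℕ) :
    rootDeg (t :: l) (k + 1) = rootDeg l k := by
  unfold rootDeg
  rw [List.getD_cons_succ]

lemma rootDeg_step {f : List PlaneTree} {z q b : ℕ} (hflen : f.length = z)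
    (hq : q < z) (hb : b < z) (hqb : q < b) :
    rootDeg (step q f) (b - q - 1) = rootDeg f b := by
  have hlen₁ : (f.rotate q).length = z := by rw [List.length_rotate]; exact hflen
  obtain ⟨t, l, hcons⟩ := List.exists_cons_of_ne_nil (l := f.rotate q)
    (by intro h; rw [h] at hlen₁; simp at hlen₁; omega)
  have hl : l.length = z - 1 := by rw [hcons] at hlen₁; simp at hlen₁; omega
  have hstep : step q f = l ++ kids t := by rw [step, hcons]; rfl
  set k := b - q - 1 with hk
  have hbq : b - q = k + 1 := by omega
  rw [hstep, rootDeg_append_left l (kids t) _ (by omega)]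
  have h2 : rootDeg l k = rootDeg (t :: l) (b - q) := by
    rw [hbq, rootDeg_cons_succ]
  rw [h2, ← hcons, rootDeg_rotate f q (b - q) (by omega), show b - q + q = b by omega,
    hflen, Nat.mod_eq_of_lt hb]

lemma bijOn_restrict {α β : Type*} {F : α → β} {A : Set α} {B : Set β} (h : Set.BijOn F A B)
    (P : α → Prop) (Q : β → Prop) (hPQ : ∀ f ∈ A, (P f ↔ Q (F f))) :
    Set.BijOn F {f ∈ A | P f} {g ∈ B | Q g} := by
  refine ⟨?_, fun x hx y hy => h.injOn hx.1 hy.1, ?_⟩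
  · rintro f ⟨hfA, hfP⟩
    exact ⟨h.mapsTo hfA, (hPQ f hfA).mp hfP⟩
  · rintro g ⟨hgB, hgQ⟩
    obtain ⟨f, hfA, rfl⟩ := h.surjOn hgB
    exact ⟨f, ⟨hfA, (hPQ f hfA).mpr hgQ⟩, rfl⟩

/-- number of occurrences of `v` among the prescribed root degrees -/
def cntOf {r : ℕ} (iv : Fin r → ℕ) : ℕ → ℕ :=
  fun v => (Finset.univ.filter fun a => iv a = v).card

lemma cntOf_succ {r : ℕ} (iv : Fin (r+1) → ℕ) (v : ℕ) :
    cntOf iv v = (if iv 0 = v then 1 else 0) + cntOf (fun a : Fin r => iv a.succ) v := by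
  simp only [cntOf, Finset.card_filter]
  rw [Fin.sum_univ_succ]

lemma fiber_ncard (K : ℕ) : ∀ (r : ℕ) (s : ℕ → ℕ) (m z : ℕ), (∀ v, K ≤ v → s v = 0) →
    (∑ v ∈ Finset.range K, s v = m) → (m = z + ∑ v ∈ Finset.range K, v * s v) → 1 ≤ z →
    ∀ (j : Fin r → ℕ), StrictMono j → (∀ a, j a < z) →
    ∀ (iv : Fin r → ℕ), (∀ a, 1 ≤ iv a) →
    ((∀ v, cntOf iv v ≤ s v) ∧
      {f ∈ forestSet s | ∀ a, rootDeg f (j a) = iv a}.ncard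
        = (forestSet (fun v => s v - cntOf iv v)).ncard)
    ∨ {f ∈ forestSet s | ∀ a, rootDeg f (j a) = iv a}.ncard = 0 := by
  intro r
  induction r with
  | zero =>
    intro s m z hs hm hz hz1 j hjmono hjz iv hiv
    left
    constructor
    · intro v
      have : cntOf iv v = 0 := by simp [cntOf]
      omega
    · have h1 : {f ∈ forestSet s | ∀ a : Fin 0, rootDeg f (j a) = iv a} = forestSet s := by
        ext f
        simp [Fin.isEmpty]
      have h2 : (fun v => s v - cntOf iv v) = s := by
        funext v
        have : cntOf iv v = 0 := by simp [cntOf]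
        omega
      rw [h1, h2]
  | succ r IH =>
    intro s m z hs hm hz hz1 j hjmono hjz iv hiv
    set q := j 0 with hq_def
    set i := iv 0 with hi_def
    have hqz : q < z := hjz 0
    by_cases hsi : 1 ≤ s i
    · -- main case
      have bij := step_bijOn hs hm hz hz1 hqz hsi
      have hlenf : ∀ f ∈ forestSet s, f.length = z := fun f hf =>
        length_mem_forest hs hm hz hf
      have hPQ : ∀ f ∈ {f ∈ forestSet s | rootDeg f q = i},
          ((∀ a : Fin r, rootDeg f (j a.succ) = iv a.succ)
            ↔ (∀ a : Fin r, rootDeg (step q f) (j a.succ - q - 1) = iv a.succ)) := by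
        rintro f ⟨hf, _⟩
        have hflen := hlenf f hf
        have hstep : ∀ a : Fin r, rootDeg (step q f) (j a.succ - q - 1)
            = rootDeg f (j a.succ) := by
          intro a
          exact rootDeg_step hflen hqz (hjz a.succ) (hjmono (Fin.succ_pos a))
        constructor
        · intro h a; rw [hstep a]; exact h a
        · intro h a; rw [← hstep a]; exact h a
      have bij2 := bijOn_restrict bij
        (fun f => ∀ a : Fin r, rootDeg f (j a.succ) = iv a.succ)
        (fun g => ∀ a : Fin r, rootDeg g (j a.succ - q - 1) = iv a.succ) hPQ
      have hA : {f ∈ {f ∈ forestSet s | rootDeg f q = i} |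
            ∀ a : Fin r, rootDeg f (j a.succ) = iv a.succ}
          = {f ∈ forestSet s | ∀ a : Fin (r+1), rootDeg f (j a) = iv a} := by
        ext f
        simp only [Set.mem_setOf_eq]
        rw [Fin.forall_fin_succ]
        tauto
      rw [hA] at bij2
      have hncard : {f ∈ forestSet s | ∀ a : Fin (r+1), rootDeg f (j a) = iv a}.ncard
          = {g ∈ forestSet (dec s i) |
              ∀ a : Fin r, rootDeg g (j a.succ - q - 1) = iv a.succ}.ncard := by
        rw [← bij2.image_eq, Set.ncard_image_of_injOn bij2.injOn]
      -- apply IH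
      have hiK : i < K := by
        by_contra h
        have := hs i (by omega); omega
      have hds : ∀ v, K ≤ v → dec s i v = 0 := fun v hv => by simp [dec, hs v hv]
      have hsum := sum_dec (K := K) hs hsi
      have hsmul := sum_mul_dec (K := K) hs hsi
      have hiE := i_le_E (K := K) hs hsi
      have hi1 : 1 ≤ i := hiv 0
      have hj'mono : StrictMono (fun a : Fin r => j a.succ - q - 1) := by
        intro a b hab
        have h1 : j a.succ < j b.succ := hjmono (by simpa using hab)
        have h2 : q < j a.succ := hjmono (Fin.succ_pos a)
        simp only
        omega
      have hj'z : ∀ a : Fin r, j a.succ - q - 1 < z - 1 + i := by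
        intro a
        have := hjz a.succ
        omega
      have IH' := IH (dec s i) (m - 1) (z - 1 + i) hds (by omega) (by omega) (by omega)
        (fun a => j a.succ - q - 1) hj'mono hj'z (fun a => iv a.succ) (fun a => hiv a.succ)
      rcases IH' with ⟨hcnt', heq'⟩ | hzero'
      · left
        constructor
        · intro v
          have h1 := cntOf_succ iv v
          have h2 := hcnt' v
          simp only [dec] at h2
          by_cases hv : iv 0 = v
          · have hvi : v = i := by rw [hi_def, ← hv]
            rw [if_pos hv] at h1
            rw [if_pos hvi] at h2
            have h3 : 1 ≤ s v := hvi ▸ hsi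
            omega
          · have hvi : ¬ (v = i) := fun h => hv (by rw [← hi_def, h])
            rw [if_neg hv] at h1
            rw [if_neg hvi] at h2
            omega
        · rw [hncard, heq']
          congr 1
          have : (fun v => s v - cntOf iv v)
              = (fun v => dec s i v - cntOf (fun a : Fin r => iv a.succ) v) := by
            funext v
            have h1 := cntOf_succ iv v
            simp only [dec]
            by_cases hv : iv 0 = v
            · have hvi : v = i := by rw [hi_def, ← hv]
              rw [if_pos hv] at h1
              rw [if_pos hvi]
              omega
            · have hvi : ¬ (v = i) := fun h => hv (by rw [← hi_def, h])
              rw [if_neg hv] at h1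
              rw [if_neg hvi]
              omega
          rw [this]
      · right
        rw [hncard]
        exact hzero'
    · -- empty case
      right
      have hempty : {f ∈ forestSet s | ∀ a : Fin (r+1), rootDeg f (j a) = iv a} = ∅ := by
        ext f
        simp only [Set.mem_setOf_eq, Set.mem_empty_iff_false, iff_false, not_and]
        intro hf hall
        have hflen := length_mem_forest hs hm hz hf
        have h9 := one_le_s_of_rootDeg hf (p := q) (by omega) (hall 0)
        rw [← hi_def] at h9
        omega
      rw [hempty, Set.ncard_empty]

-- ============ chunk 6 ============

lemma factorial_le_sub (sv : ℕ) : ∀ c, c ≤ sv → sv ! ≤ (sv - c)! * sv ^ c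
  | 0, _ => by simp
  | c+1, h => by
    have h1 := factorial_le_sub sv c (by omega)
    have h2 : (sv - c)! = (sv - c) * (sv - (c+1))! := by
      rw [show sv - c = (sv - (c+1)) + 1 by omega, Nat.factorial_succ]
    calc sv ! ≤ (sv - c)! * sv ^ c := h1
      _ = (sv - c) * (sv - (c+1))! * sv ^ c := by rw [h2]
      _ ≤ sv * (sv - (c+1))! * sv ^ c := by
          exact Nat.mul_le_mul_right _ (Nat.mul_le_mul_right _ (by omega))
      _ = (sv - (c+1))! * sv ^ (c+1) := by ring

lemma pow_mul_factorial_le (a : ℕ) : ∀ b, b ≤ a → (a + 1 - b) ^ b * (a - b)! ≤ a !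
  | 0, _ => by simp
  | b+1, h => by
    have h1 := pow_mul_factorial_le a b (by omega)
    have h2 : (a - b)! = (a - b) * (a - (b+1))! := by
      rw [show a - b = (a - (b+1)) + 1 by omega, Nat.factorial_succ]
    calc (a + 1 - (b+1)) ^ (b+1) * (a - (b+1))!
        = (a - b) ^ (b+1) * (a - (b+1))! := by rw [show a + 1 - (b+1) = a - b by omega]
      _ = (a - b) ^ b * ((a - b) * (a - (b+1))!) := by ring
      _ = (a - b) ^ b * (a - b)! := by rw [← h2]
      _ ≤ (a + 1 - b) ^ b * (a - b)! := by
          exact Nat.mul_le_mul_right _ (Nat.pow_le_pow_left (by omega) b)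
      _ ≤ a ! := h1

lemma sum_cntOf {r K : ℕ} (iv : Fin r → ℕ) (hK : ∀ a, iv a < K) :
    ∑ v ∈ Finset.range K, cntOf iv v = r := by
  have h := Finset.card_eq_sum_card_fiberwise (f := iv) (s := Finset.univ)
    (t := Finset.range K) (fun a _ => Finset.mem_range.mpr (hK a))
  simpa [cntOf] using h.symm

lemma sum_mul_cntOf {r K : ℕ} (iv : Fin r → ℕ) (hK : ∀ a, iv a < K) :
    ∑ v ∈ Finset.range K, v * cntOf iv v = ∑ a, iv a := by
  have h := Finset.sum_fiberwise_of_maps_to (g := iv) (s := Finset.univ)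
    (t := Finset.range K) (fun a _ => Finset.mem_range.mpr (hK a)) iv
  rw [← h]
  apply Finset.sum_congr rfl
  intro v _
  rw [Finset.sum_congr rfl (fun a ha => (Finset.mem_filter.mp ha).2)]
  simp [cntOf, Nat.mul_comm]

lemma prod_cntOf_pow {r K : ℕ} (iv : Fin r → ℕ) (hK : ∀ a, iv a < K) (s : ℕ → ℕ) :
    ∏ v ∈ Finset.range K, s v ^ cntOf iv v = ∏ a, s (iv a) := by
  have h := Finset.prod_fiberwise_of_maps_to (g := iv) (s := Finset.univ)
    (t := Finset.range K) (fun a _ => Finset.mem_range.mpr (hK a)) (fun a => s (iv a))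
  rw [← h]
  apply Finset.prod_congr rfl
  intro v _
  rw [Finset.prod_congr rfl (fun a ha => by rw [(Finset.mem_filter.mp ha).2])]
  simp [cntOf]

-- ============ chunk 7 ============

lemma per_tuple_bound {s : ℕ → ℕ} {M z m Δ r : ℕ}
    (hsupp : ∀ i, M ≤ i → s i = 0)
    (hm : ∑ i ∈ Finset.range M, s i = m)
    (hz : m = z + ∑ i ∈ Finset.range M, i * s i)
    (hz1 : 1 ≤ z) (hΔM : Δ < M)
    (hr : 1 ≤ r) (hrm : 2 * r ≤ m)
    (j : Fin r → ℕ) (hj : StrictMono j) (hjz : ∀ a, j a < z)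
    (iv : Fin r → ℕ) (hiv1 : ∀ a, 1 ≤ iv a) (hivΔ : ∀ a, iv a ≤ Δ) :
    {f ∈ forestSet s | ∀ a, rootDeg f (j a) = iv a}.ncard * (z * (m - r) ^ r)
      ≤ (z + r * Δ) * ((forestSet s).ncard * ∏ a, s (iv a)) := by
  rcases fiber_ncard M r s m z hsupp hm hz hz1 j hj hjz iv hiv1 with ⟨hcnt, heq⟩ | hzero
  swap
  · rw [hzero]; simp
  rw [heq]
  set s' := fun v => s v - cntOf iv v with hs'
  set R' := (forestSet s').ncard with hR'
  have hivM : ∀ a, iv a < M := fun a => lt_of_le_of_lt (hivΔ a) hΔM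
  have hs'supp : ∀ v, M ≤ v → s' v = 0 := fun v hv => by
    simp only [hs']
    rw [hsupp v hv]
    omega
  have hsum_cnt : ∑ v ∈ Finset.range M, cntOf iv v = r := sum_cntOf iv hivM
  have hsum' : ∑ v ∈ Finset.range M, s' v = m - r := by
    simp only [hs']
    rw [Finset.sum_tsub_distrib _ (fun v _ => hcnt v), hm, hsum_cnt]
  have hSiv_def : ∑ v ∈ Finset.range M, v * cntOf iv v = ∑ a, iv a := sum_mul_cntOf iv hivM
  set Siv := ∑ a, iv a with hSiv
  have hr_le_Siv : r ≤ Siv := by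
    rw [hSiv]
    calc r = ∑ _a : Fin r, 1 := by simp
      _ ≤ ∑ a, iv a := Finset.sum_le_sum fun a _ => hiv1 a
  have hSiv_le : Siv ≤ r * Δ := by
    rw [hSiv]
    calc ∑ a, iv a ≤ ∑ _a : Fin r, Δ := Finset.sum_le_sum fun a _ => hivΔ a
      _ = r * Δ := by simp [Finset.sum_const, smul_eq_mul]
  have hmulsub : ∑ v ∈ Finset.range M, v * s' v
      = ∑ v ∈ Finset.range M, v * s v - Siv := by
    have key : ∀ v ∈ Finset.range M, v * s' v = v * s v - v * cntOf iv v := by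
      intro v _
      simp only [hs']
      exact Nat.mul_sub v (s v) (cntOf iv v)
    rw [Finset.sum_congr rfl key,
      Finset.sum_tsub_distrib _ (fun v _ => Nat.mul_le_mul_left v (hcnt v)), hSiv_def]
  have hE_Siv_le : Siv ≤ ∑ v ∈ Finset.range M, v * s v := by
    rw [← hSiv_def]
    exact Finset.sum_le_sum fun v _ => Nat.mul_le_mul_left v (hcnt v)
  set z' := z + Siv - r with hz'
  have hz'1 : 1 ≤ z' := by omega
  have hz'eq : m - r = z' + ∑ v ∈ Finset.range M, v * s' v := by
    rw [hmulsub]; omega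
  have hcount' := forestSet_ncard_eq M (m - r) s' z' hs'supp hsum' hz'eq hz'1
  have hcount := forestSet_ncard_eq M m s z hsupp hm hz hz1
  set P' := ∏ v ∈ Finset.range M, (s' v)! with hP'
  have hP'pos : 0 < P' := Finset.prod_pos fun v _ => Nat.factorial_pos _
  have h3 : ∏ v ∈ Finset.range M, (s v)! ≤ P' * ∏ a, s (iv a) := by
    calc ∏ v ∈ Finset.range M, (s v)!
        ≤ ∏ v ∈ Finset.range M, ((s' v)! * s v ^ cntOf iv v) := by
          apply Finset.prod_le_prod'
          intro v _
          exact factorial_le_sub (s v) (cntOf iv v) (hcnt v)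
      _ = P' * ∏ v ∈ Finset.range M, s v ^ cntOf iv v := Finset.prod_mul_distrib
      _ = P' * ∏ a, s (iv a) := by rw [prod_cntOf_pow iv hivM]
  have h4 : (m - r) ^ r * (m - r - 1)! ≤ (m - 1)! := by
    have h := pow_mul_factorial_le (m - 1) r (by omega)
    rw [show m - 1 + 1 - r = m - r by omega, show m - 1 - r = m - r - 1 by omega] at h
    exact h
  have hz'le : z' ≤ z + r * Δ := by omega
  have main : (R' * (z * (m - r) ^ r)) * P'
      ≤ ((z + r * Δ) * ((forestSet s).ncard * ∏ a, s (iv a))) * P' := by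
    calc (R' * (z * (m - r) ^ r)) * P'
        = (z * (m - r) ^ r) * (R' * P') := by ring
      _ = (z * (m - r) ^ r) * (z' * (m - r - 1)!) := by rw [hcount']
      _ = (z' * z) * ((m - r) ^ r * (m - r - 1)!) := by ring
      _ ≤ (z' * z) * (m - 1)! := Nat.mul_le_mul_left _ h4
      _ = z' * ((forestSet s).ncard * ∏ v ∈ Finset.range M, (s v)!) := by rw [hcount]; ring
      _ ≤ z' * ((forestSet s).ncard * (P' * ∏ a, s (iv a))) := by
          exact Nat.mul_le_mul_left _ (Nat.mul_le_mul_left _ h3)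
      _ = (z' * ((forestSet s).ncard * ∏ a, s (iv a))) * P' := by ring
      _ ≤ ((z + r * Δ) * ((forestSet s).ncard * ∏ a, s (iv a))) * P' := by
          exact Nat.mul_le_mul_right _ (Nat.mul_le_mul_right _ hz'le)
  exact Nat.le_of_mul_le_mul_right main hP'pos

end PlaneTree
end Paper

open Paper Paper.PlaneTree in
/-- joint moment bound for the root children counts of a uniform forest. -/
theorem forest_roots_moment_upper (s : ℕ → ℕ) (M z m Δ r : ℕ)
    (hsupp : ∀ i, M ≤ i → s i = 0)
    (hm : m = ∑ i ∈ Finset.range M, s i)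
    (hz : m = z + ∑ i ∈ Finset.range M, i * s i)
    (hz1 : 1 ≤ z)
    (hΔ : s Δ ≠ 0) (hΔ' : ∀ i, Δ < i → s i = 0)
    (hr : 1 ≤ r) (hrz : r ≤ z) (hrm : 2 * r ≤ m)
    (σ : Fin r → ℕ) (hσ : ∀ a, 1 ≤ σ a)
    (j : Fin r → ℕ) (hj : StrictMono j) (hjz : ∀ a, j a < z)
    (hfin : (forestSet s).Finite) :
    (∑ f ∈ hfin.toFinset, ∏ a, (rootDeg f (j a) : ℝ) ^ (σ a))
        / (forestSet s).ncard
      ≤ (r : ℝ) * 2 ^ r * ((∑ i ∈ Finset.range M, (i : ℝ) ^ 2 * (s i : ℝ)) / m) ^ r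
        * (1 + (Δ : ℝ) / z) * (Δ : ℝ) ^ ((∑ a, σ a) - r) := by
  classical
  have hm' : ∑ i ∈ Finset.range M, s i = m := hm.symm
  have hΔM : Δ < M := by
    by_contra h
    exact hΔ (hsupp Δ (by omega))
  have hmpos : 0 < m := by omega
  have hcount := forestSet_ncard_eq M m s z hsupp hm' hz hz1
  set R := (forestSet s).ncard with hR
  have hRpos : 0 < R := by
    by_contra h
    have h0 : R = 0 := by omega
    rw [h0, Nat.zero_mul] at hcount
    have h1 := Nat.factorial_pos (m - 1)
    have h2 : 0 < z * Nat.factorial (m-1) := Nat.mul_pos hz1 h1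
    omega
  set T := hfin.toFinset with hT
  have hmemT : ∀ f, f ∈ T ↔ f ∈ forestSet s := fun f => hfin.mem_toFinset
  have hmaps : ∀ f ∈ T, (fun a => rootDeg f (j a))
      ∈ Fintype.piFinset (fun _ : Fin r => Finset.range (Δ+1)) := by
    intro f hf
    rw [Fintype.mem_piFinset]
    intro a
    rw [Finset.mem_range]
    have hf' := (hmemT f).mp hf
    have hflen : f.length = z := length_mem_forest hsupp hm' hz hf'
    have h1 := one_le_s_of_rootDeg hf' (p := j a) (by rw [hflen]; exact hjz a) rfl
    by_contra hcon
    have := hΔ' (rootDeg f (j a)) (by omega)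
    omega
  set Sn := ∑ f ∈ T, ∏ a, (rootDeg f (j a)) ^ (σ a) with hSn
  set Q := ∑ i ∈ Finset.range M, i * i * s i with hQ
  set D := (∑ a, σ a) - r with hD
  have hfactor : ∀ a : Fin r, ∑ i ∈ Finset.range (Δ+1), i ^ (σ a) * s i
      ≤ Δ ^ (σ a - 1) * Q := by
    intro a
    have hpt : ∀ i ∈ Finset.range (Δ+1), i ^ (σ a) * s i ≤ Δ ^ (σ a - 1) * (i * i * s i) := by
      intro i hi
      rcases Nat.eq_zero_or_pos i with rfl | hipos
      · rw [Nat.zero_pow (by have := hσ a; omega)]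
        simp
      · have hiΔ : i ≤ Δ := by rw [Finset.mem_range] at hi; omega
        have e : i ^ (σ a) = i ^ (σ a - 1) * i := by
          rw [← Nat.pow_succ]
          congr 1
          have := hσ a
          omega
        rw [e]
        calc i ^ (σ a - 1) * i * s i
            ≤ Δ ^ (σ a - 1) * i * s i :=
              Nat.mul_le_mul_right _ (Nat.mul_le_mul_right _ (Nat.pow_le_pow_left hiΔ _))
          _ = Δ ^ (σ a - 1) * (i * s i) := by ring
          _ ≤ Δ ^ (σ a - 1) * (i * i * s i) := by
              apply Nat.mul_le_mul_left
              calc i * s i ≤ (i * i) * s i :=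
                    Nat.mul_le_mul_right _ (Nat.le_mul_of_pos_left i hipos)
                _ = i * i * s i := by ring
    calc ∑ i ∈ Finset.range (Δ+1), i ^ (σ a) * s i
        ≤ ∑ i ∈ Finset.range (Δ+1), Δ ^ (σ a - 1) * (i * i * s i) :=
          Finset.sum_le_sum hpt
      _ = Δ ^ (σ a - 1) * ∑ i ∈ Finset.range (Δ+1), i * i * s i := by
          rw [Finset.mul_sum]
      _ ≤ Δ ^ (σ a - 1) * Q := by
          apply Nat.mul_le_mul_left
          rw [hQ]
          exact Finset.sum_le_sum_of_subset
            (Finset.range_subset_range.mpr (by omega))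
  have hprodfac : (∏ a, ∑ i ∈ Finset.range (Δ+1), i ^ (σ a) * s i) ≤ Δ ^ D * Q ^ r := by
    calc (∏ a, ∑ i ∈ Finset.range (Δ+1), i ^ (σ a) * s i)
        ≤ ∏ a, (Δ ^ (σ a - 1) * Q) := Finset.prod_le_prod' fun a _ => hfactor a
      _ = (∏ a, Δ ^ (σ a - 1)) * ∏ _a : Fin r, Q := Finset.prod_mul_distrib
      _ = Δ ^ (∑ a, (σ a - 1)) * Q ^ r := by
          rw [Finset.prod_pow_eq_pow_sum, Finset.prod_const]
          simp
      _ = Δ ^ D * Q ^ r := by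
          congr 2
          rw [hD]
          have h1 : ∑ a, σ a = (∑ a, (σ a - 1)) + r := by
            have h2 : ∀ a : Fin r, σ a = (σ a - 1) + 1 := fun a => by have := hσ a; omega
            calc ∑ a, σ a = ∑ a, ((σ a - 1) + 1) := Finset.sum_congr rfl fun a _ => h2 a
              _ = (∑ a, (σ a - 1)) + r := by rw [Finset.sum_add_distrib]; simp
          omega
  have hm2r : m ^ r ≤ 2 ^ r * (m - r) ^ r := by
    calc m ^ r ≤ (2 * (m - r)) ^ r := Nat.pow_le_pow_left (by omega) r
      _ = 2 ^ r * (m - r) ^ r := by rw [Nat.mul_pow]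
  have hzr : z + r * Δ ≤ r * (z + Δ) := by
    have h1 : z * 1 ≤ z * r := Nat.mul_le_mul_left z hr
    have h2 : r * (z + Δ) = r * z + r * Δ := by ring
    have h3 : z * 1 = z := by ring
    have h4 : z * r = r * z := by ring
    omega
  -- fiberwise decomposition
  have hfib := Finset.sum_fiberwise_of_maps_to hmaps (fun f => ∏ a, (rootDeg f (j a)) ^ (σ a))
  have hinner : ∀ y ∈ Fintype.piFinset (fun _ : Fin r => Finset.range (Δ+1)),
      (∑ f ∈ T.filter (fun f => (fun a => rootDeg f (j a)) = y),
        ∏ a, (rootDeg f (j a)) ^ (σ a))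
      = (T.filter (fun f => (fun a => rootDeg f (j a)) = y)).card * ∏ a, (y a) ^ (σ a) := by
    intro y _
    rw [Finset.sum_congr rfl (fun f hf => ?_), Finset.sum_const, smul_eq_mul]
    have hfy : (fun a => rootDeg f (j a)) = y := (Finset.mem_filter.mp hf).2
    exact Finset.prod_congr rfl fun a _ => by rw [congrFun hfy a]
  -- per-tuple bound
  have htuple : ∀ y ∈ Fintype.piFinset (fun _ : Fin r => Finset.range (Δ+1)),
      ((T.filter (fun f => (fun a => rootDeg f (j a)) = y)).card * ∏ a, (y a) ^ (σ a))
          * (z * (m - r) ^ r)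
        ≤ (z + r * Δ) * (R * ∏ a, ((y a) ^ (σ a) * s (y a))) := by
    intro y hy
    by_cases hy0 : ∀ a, 1 ≤ y a
    · have hyΔ : ∀ a, y a ≤ Δ := by
        intro a
        have := Fintype.mem_piFinset.mp hy a
        rw [Finset.mem_range] at this
        omega
      have hcardeq : (T.filter (fun f => (fun a => rootDeg f (j a)) = y)).card
          = {f ∈ forestSet s | ∀ a, rootDeg f (j a) = y a}.ncard := by
        rw [← Set.ncard_coe_finset]
        congr 1
        ext f
        simp only [Finset.coe_filter, Set.mem_setOf_eq, hmemT f, funext_iff]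
      have hb := per_tuple_bound hsupp hm' hz hz1 hΔM hr hrm j hj hjz y hy0 hyΔ
      rw [hcardeq]
      calc ({f ∈ forestSet s | ∀ a, rootDeg f (j a) = y a}.ncard * ∏ a, (y a) ^ (σ a))
            * (z * (m - r) ^ r)
          = (∏ a, (y a) ^ (σ a))
              * ({f ∈ forestSet s | ∀ a, rootDeg f (j a) = y a}.ncard * (z * (m - r) ^ r)) := by
            ring
        _ ≤ (∏ a, (y a) ^ (σ a)) * ((z + r * Δ) * (R * ∏ a, s (y a))) :=
            Nat.mul_le_mul_left _ hb
        _ = (z + r * Δ) * (R * ((∏ a, (y a) ^ (σ a)) * ∏ a, s (y a))) := by ring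
        _ = (z + r * Δ) * (R * ∏ a, ((y a) ^ (σ a) * s (y a))) := by
            rw [← Finset.prod_mul_distrib]
    · push_neg at hy0
      obtain ⟨a, ha⟩ := hy0
      have hW : (∏ a', (y a') ^ (σ a')) = 0 := by
        apply Finset.prod_eq_zero (Finset.mem_univ a)
        rw [show y a = 0 by omega]
        exact Nat.zero_pow (by have := hσ a; omega)
      rw [hW]
      simp
  -- summed bound
  have hmaster1 : Sn * (z * (m - r) ^ r)
      ≤ (z + r * Δ) * (R * ∑ y ∈ Fintype.piFinset (fun _ : Fin r => Finset.range (Δ+1)),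
          ∏ a, ((y a) ^ (σ a) * s (y a))) := by
    rw [hSn, ← hfib, Finset.sum_congr rfl hinner, Finset.sum_mul, Finset.mul_sum,
      Finset.mul_sum]
    exact Finset.sum_le_sum fun y hy => by
      have := htuple y hy
      calc (T.filter (fun f => (fun a => rootDeg f (j a)) = y)).card * (∏ a, (y a) ^ (σ a))
            * (z * (m - r) ^ r)
          ≤ (z + r * Δ) * (R * ∏ a, ((y a) ^ (σ a) * s (y a))) := this
        _ = (z + r * Δ) * R * ∏ a, ((y a) ^ (σ a) * s (y a)) := by ring
        _ = (z + r * Δ) * (R * ∏ a, ((y a) ^ (σ a) * s (y a))) := by ring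
  -- product of sums
  have hps : ∑ y ∈ Fintype.piFinset (fun _ : Fin r => Finset.range (Δ+1)),
      ∏ a, ((y a) ^ (σ a) * s (y a))
      = ∏ a, ∑ i ∈ Finset.range (Δ+1), i ^ (σ a) * s i :=
    (Finset.prod_univ_sum (fun _ : Fin r => Finset.range (Δ+1))
      (fun a i => i ^ (σ a) * s i)).symm
  -- full ℕ master inequality
  have hmaster : Sn * (z * m ^ r) ≤ (r * 2 ^ r * (z + Δ)) * (R * (Δ ^ D * Q ^ r)) := by
    calc Sn * (z * m ^ r)
        ≤ Sn * (z * (2 ^ r * (m - r) ^ r)) :=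
          Nat.mul_le_mul_left _ (Nat.mul_le_mul_left _ hm2r)
      _ = 2 ^ r * (Sn * (z * (m - r) ^ r)) := by ring
      _ ≤ 2 ^ r * ((z + r * Δ) * (R * (Δ ^ D * Q ^ r))) := by
          apply Nat.mul_le_mul_left
          calc Sn * (z * (m - r) ^ r)
              ≤ (z + r * Δ) * (R * ∑ y ∈ Fintype.piFinset
                  (fun _ : Fin r => Finset.range (Δ+1)), ∏ a, ((y a) ^ (σ a) * s (y a))) :=
                hmaster1
            _ = (z + r * Δ) * (R * ∏ a, ∑ i ∈ Finset.range (Δ+1), i ^ (σ a) * s i) := by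
                rw [hps]
            _ ≤ (z + r * Δ) * (R * (Δ ^ D * Q ^ r)) :=
                Nat.mul_le_mul_left _ (Nat.mul_le_mul_left _ hprodfac)
      _ ≤ 2 ^ r * ((r * (z + Δ)) * (R * (Δ ^ D * Q ^ r))) :=
          Nat.mul_le_mul_left _ (Nat.mul_le_mul_right _ hzr)
      _ = (r * 2 ^ r * (z + Δ)) * (R * (Δ ^ D * Q ^ r)) := by ring
  -- real conversion
  have hLHS : (∑ f ∈ T, ∏ a, (rootDeg f (j a) : ℝ) ^ (σ a)) = (Sn : ℝ) := by
    rw [hSn]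
    push_cast
    rfl
  have hQcast : (∑ i ∈ Finset.range M, (i : ℝ) ^ 2 * (s i : ℝ)) = (Q : ℝ) := by
    rw [hQ, Nat.cast_sum]
    apply Finset.sum_congr rfl
    intro i _
    push_cast
    ring
  rw [hLHS, hQcast]
  have hRR : (0 : ℝ) < (R : ℝ) := by exact_mod_cast hRpos
  rw [div_le_iff₀ hRR]
  have hzmr : (0 : ℝ) < (z : ℝ) * (m : ℝ) ^ r := by
    have h1 : (0:ℝ) < (z:ℝ) := by exact_mod_cast hz1
    have h2 : (0:ℝ) < (m:ℝ) := by exact_mod_cast hmpos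
    positivity
  apply le_of_mul_le_mul_right ?_ hzmr
  have hcast : (Sn : ℝ) * ((z : ℝ) * (m : ℝ) ^ r)
      ≤ ((r : ℝ) * 2 ^ r * ((z : ℝ) + (Δ : ℝ))) * ((R : ℝ) * ((Δ : ℝ) ^ D * (Q : ℝ) ^ r)) := by
    exact_mod_cast hmaster
  apply le_trans hcast
  have hmne : (m : ℝ) ≠ 0 := by positivity
  have hzne : (z : ℝ) ≠ 0 := by
    have h1 : (0:ℝ) < (z:ℝ) := by exact_mod_cast hz1
    positivity
  rw [show (r : ℝ) * 2 ^ r * ((Q : ℝ) / (m : ℝ)) ^ r * (1 + (Δ : ℝ) / (z : ℝ)) * (Δ : ℝ) ^ D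
        * (R : ℝ) * ((z : ℝ) * (m : ℝ) ^ r)
      = (r : ℝ) * 2 ^ r * ((z : ℝ) + (Δ : ℝ)) * ((R : ℝ) * ((Δ : ℝ) ^ D * (Q : ℝ) ^ r)) from by
    field_simp
    ring_nf
    rw [inv_pow, mul_inv_cancel_right₀ (pow_ne_zero r hmne)]]
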